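/- Let N ≥ 1 and let I_1, …, I_N be pairwise disjoint nondegenerate closed intervals contained in [-π/8, π/8], with union 𝓘 = I_1 ∪ ⋯ ∪ I_N. Define H : ℝ → ℝ by H(θ) = ∫_𝓘 |sin(2(θ - θ'))| dθ'. If H takes the same value at all 2N endpoints of the intervals I_1, …, I_N, then N = 1, i.e., 𝓘 is a single interval. -/

import Mathlib

open Real MeasureTheory

lemma cont_abs_sin (θ : ℝ) : Continuous fun t : ℝ => |Real.sin (2 * (θ - t))| := by
  fun_prop

/-- Integral of `|sin (2(θ - t))|` over `[u,v]` when the interval lies to the right of `θ`. -/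
lemma int_abs_sin_right (θ u v : ℝ) (hθu : θ ≤ u) (huv : u ≤ v) (hv : v - θ ≤ π / 2) :
    ∫ t in Set.Icc u v, |Real.sin (2 * (θ - t))| =
      (Real.cos (2 * (u - θ)) - Real.cos (2 * (v - θ))) / 2 := by
  have h1 : (∫ t in Set.Icc u v, |Real.sin (2 * (θ - t))|)
      = ∫ t in u..v, |Real.sin (2 * (θ - t))| := by
    rw [intervalIntegral.integral_of_le huv, MeasureTheory.integral_Icc_eq_integral_Ioc]
  rw [h1]
  have h2 : (∫ t in u..v, |Real.sin (2 * (θ - t))|) = ∫ t in u..v, Real.sin (2 * (t - θ)) := by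
    apply intervalIntegral.integral_congr
    intro t ht
    rw [Set.uIcc_of_le huv] at ht
    have h0 : 0 ≤ 2 * (t - θ) := by nlinarith [ht.1]
    have hpi : 2 * (t - θ) ≤ π := by nlinarith [ht.2]
    show |Real.sin (2 * (θ - t))| = Real.sin (2 * (t - θ))
    have hs : Real.sin (2 * (θ - t)) = -Real.sin (2 * (t - θ)) := by
      rw [show 2 * (θ - t) = -(2 * (t - θ)) by ring, Real.sin_neg]
    rw [hs, abs_neg, abs_of_nonneg (Real.sin_nonneg_of_nonneg_of_le_pi h0 hpi)]
  rw [h2]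
  have h3 : ∀ t ∈ Set.uIcc u v, HasDerivAt (fun s => -Real.cos (2 * (s - θ)) / 2)
      (Real.sin (2 * (t - θ))) t := by
    intro t _
    have hg : HasDerivAt (fun s : ℝ => 2 * (s - θ)) 2 t := by
      simpa using ((hasDerivAt_id t).sub_const θ).const_mul 2
    have h4 := ((Real.hasDerivAt_cos (2 * (t - θ))).comp t hg).neg.div_const 2
    exact h4.congr_deriv (by ring)
  rw [intervalIntegral.integral_eq_sub_of_hasDerivAt h3
    ((by fun_prop : Continuous fun x : ℝ => Real.sin (2 * (x - θ))).intervalIntegrable u v)]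
  ring

/-- Integral of `|sin (2(θ - t))|` over `[u,v]` when the interval lies to the left of `θ`. -/
lemma int_abs_sin_left (θ u v : ℝ) (huv : u ≤ v) (hvθ : v ≤ θ) (hu : θ - u ≤ π / 2) :
    ∫ t in Set.Icc u v, |Real.sin (2 * (θ - t))| =
      (Real.cos (2 * (θ - v)) - Real.cos (2 * (θ - u))) / 2 := by
  have h1 : (∫ t in Set.Icc u v, |Real.sin (2 * (θ - t))|)
      = ∫ t in u..v, |Real.sin (2 * (θ - t))| := by
    rw [intervalIntegral.integral_of_le huv, MeasureTheory.integral_Icc_eq_integral_Ioc]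
  rw [h1]
  have h2 : (∫ t in u..v, |Real.sin (2 * (θ - t))|) = ∫ t in u..v, Real.sin (2 * (θ - t)) := by
    apply intervalIntegral.integral_congr
    intro t ht
    rw [Set.uIcc_of_le huv] at ht
    have h0 : 0 ≤ 2 * (θ - t) := by nlinarith [ht.2]
    have hpi : 2 * (θ - t) ≤ π := by nlinarith [ht.1]
    show |Real.sin (2 * (θ - t))| = Real.sin (2 * (θ - t))
    rw [abs_of_nonneg (Real.sin_nonneg_of_nonneg_of_le_pi h0 hpi)]
  rw [h2]
  have h3 : ∀ t ∈ Set.uIcc u v, HasDerivAt (fun s => Real.cos (2 * (θ - s)) / 2)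
      (Real.sin (2 * (θ - t))) t := by
    intro t _
    have hg : HasDerivAt (fun s : ℝ => 2 * (θ - s)) (-2) t := by
      simpa using ((hasDerivAt_id t).const_sub θ).const_mul 2
    have h4 := ((Real.hasDerivAt_cos (2 * (θ - t))).comp t hg).div_const 2
    exact h4.congr_deriv (by ring)
  rw [intervalIntegral.integral_eq_sub_of_hasDerivAt h3
    ((by fun_prop : Continuous fun x : ℝ => Real.sin (2 * (θ - x))).intervalIntegrable u v)]
  ring

/-- a rotating union of sectors supported in `[-π/8, π/8]` must be a
single sector: if `H(θ) = ∫_𝓘 |sin(2(θ-θ'))| dθ'` takes the same value at all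
endpoints of the pairwise disjoint nondegenerate intervals `I_1, …, I_N ⊆ [-π/8, π/8]`,
then `N = 1`. -/
theorem rotating_sector_classification
    (N : ℕ) (hN : 1 ≤ N) (a b : Fin N → ℝ)
    (hab : ∀ i, a i < b i)
    (hsub : ∀ i, Set.Icc (a i) (b i) ⊆ Set.Icc (-(π / 8)) (π / 8))
    (hdisj : Pairwise (Function.onFun Disjoint fun i => Set.Icc (a i) (b i)))
    (H : ℝ → ℝ)
    (hH : ∀ θ : ℝ, H θ =
      ∫ θ' in (⋃ i, Set.Icc (a i) (b i)), |Real.sin (2 * (θ - θ'))|)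
    (c : ℝ) (hc : ∀ i, H (a i) = c ∧ H (b i) = c) :
    N = 1 := by
  by_contra hne
  have hN2 : 2 ≤ N := by omega
  have hπ := Real.pi_pos
  haveI : Nonempty (Fin N) := ⟨⟨0, by omega⟩⟩
  -- bounds on endpoints
  have hbd : ∀ i, -(π / 8) ≤ a i ∧ b i ≤ π / 8 := fun i =>
    ⟨((hsub i) (Set.left_mem_Icc.mpr (hab i).le)).1,
     ((hsub i) (Set.right_mem_Icc.mpr (hab i).le)).2⟩
  -- a minimal interval
  obtain ⟨m, hm⟩ := Finite.exists_min a
  have hbm : ∀ i, i ≠ m → b m < a i := by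
    intro i hi
    by_contra hcon
    push_neg at hcon
    exact (Set.disjoint_right.mp (hdisj (Ne.symm hi))
      (Set.left_mem_Icc.mpr (hab i).le)) ⟨hm i, hcon⟩
  -- split the integral into a sum
  have hsplit : ∀ θ : ℝ, H θ = ∑ i, ∫ t in Set.Icc (a i) (b i), |Real.sin (2 * (θ - t))| := by
    intro θ
    have hint : MeasureTheory.IntegrableOn (fun t => |Real.sin (2 * (θ - t))|)
        (⋃ i, Set.Icc (a i) (b i)) := by
      rw [MeasureTheory.integrableOn_finite_iUnion]
      intro i
      exact (cont_abs_sin θ).integrableOn_Icc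
    rw [hH θ, MeasureTheory.integral_iUnion (fun i => measurableSet_Icc) hdisj hint, tsum_fintype]
  -- strict comparison for intervals to the right
  have hlt : ∀ i, i ≠ m →
      (∫ t in Set.Icc (a i) (b i), |Real.sin (2 * (b m - t))|)
        < ∫ t in Set.Icc (a i) (b i), |Real.sin (2 * (a m - t))| := by
    intro i hi
    have hbdi := hbd i
    have hbdm := hbd m
    have habm := hab m
    have habi := hab i
    have hbmi := hbm i hi
    rw [int_abs_sin_right (a m) (a i) (b i) (hm i) (hab i).le (by linarith),
        int_abs_sin_right (b m) (a i) (b i) hbmi.le (hab i).le (by linarith)]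
    have e : ∀ θ : ℝ, Real.cos (2 * (a i - θ)) - Real.cos (2 * (b i - θ))
        = 2 * Real.sin (a i + b i - 2 * θ) * Real.sin (b i - a i) := by
      intro θ
      rw [Real.cos_sub_cos,
        show (2 * (a i - θ) + 2 * (b i - θ)) / 2 = a i + b i - 2 * θ by ring,
        show (2 * (a i - θ) - 2 * (b i - θ)) / 2 = -(b i - a i) by ring, Real.sin_neg]
      ring
    have hsinpos : 0 < Real.sin (b i - a i) :=
      Real.sin_pos_of_pos_of_lt_pi (by linarith) (by linarith)
    have hmono : Real.sin (a i + b i - 2 * b m) < Real.sin (a i + b i - 2 * a m) := by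
      apply Real.strictMonoOn_sin ⟨by linarith, by linarith⟩ ⟨by linarith, by linarith⟩
        (by linarith)
    rw [e (a m), e (b m)]
    nlinarith [mul_lt_mul_of_pos_right hmono hsinpos]
  -- the m-th terms agree
  have heqm : (∫ t in Set.Icc (a m) (b m), |Real.sin (2 * (b m - t))|)
      = ∫ t in Set.Icc (a m) (b m), |Real.sin (2 * (a m - t))| := by
    have hbdm := hbd m
    have habm := hab m
    rw [int_abs_sin_right (a m) (a m) (b m) le_rfl (hab m).le (by linarith),
        int_abs_sin_left (b m) (a m) (b m) (hab m).le le_rfl (by linarith),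
        show 2 * (a m - a m) = 0 by ring, show 2 * (b m - b m) = 0 by ring]
  -- produce an index different from m
  obtain ⟨i₀, hi₀⟩ : ∃ i : Fin N, i ≠ m := by
    by_cases h : m = ⟨0, by omega⟩
    · exact ⟨⟨1, by omega⟩, by simp [h, Fin.ext_iff]⟩
    · exact ⟨⟨0, by omega⟩, fun hh => h hh.symm⟩
  -- strict inequality of the sums
  have hsum : H (b m) < H (a m) := by
    rw [hsplit (a m), hsplit (b m)]
    apply Finset.sum_lt_sum
    · intro i _
      by_cases him : i = m
      · subst him; exact le_of_eq heqm
      · exact (hlt i him).le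
    · exact ⟨i₀, Finset.mem_univ _, hlt i₀ hi₀⟩
  rw [(hc m).1, (hc m).2] at hsum
  exact lt_irrefl c hsum
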